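/- Let Q(x) be analytic near 0 and let A(x) = [[a11, a12],[a21, a22]] be a traceless 2×2 matrix of germs of analytic functions with a12(0) ≠ 0. Then the gauge transformation y' = (1/√a12)·[[1, 0],[a11 − (1/2)x^{k+1}(d/dx)log a12, a12]]·y transforms the system x^{k+1} y' = A(x) y into the companion system x^{k+1} dy'/dx = [[0,1],[Q(x),0]] y', where Q(x) = −det A(x) + x^{k+1}(da11/dx) − a11·x^{k+1}(d/dx)log a12 − (1/2)(x^{k+1}d/dx)² log a12 + (1/4)(x^{k+1}(d/dx)log a12)². -/

import Mathlib

/-- The explicit gauge transformation bringing a traceless 2×2 system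
`x^{k+1} y' = A(x) y` (with `a12(0) ≠ 0`, here `a12 ≠ 0` on the domain `U`) to the
companion form `x^{k+1} z' = [[0,1],[Q,0]] z`, with `Q` given by the stated formula. -/
theorem stmt_0 (k : ℕ) (U : Set ℂ) (hU : IsOpen U)
    (a11 a12 a21 y1 y2 s : ℂ → ℂ)
    (ha12 : ∀ x ∈ U, a12 x ≠ 0)
    (hs : ∀ x ∈ U, (s x) ^ 2 = a12 x)
    (hsd : ∀ x ∈ U, DifferentiableAt ℂ s x)
    (hd11 : ∀ x ∈ U, DifferentiableAt ℂ a11 x)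
    (hd12 : ∀ x ∈ U, DifferentiableAt ℂ a12 x)
    (hd12' : ∀ x ∈ U, DifferentiableAt ℂ (deriv a12) x)
    (hd21 : ∀ x ∈ U, DifferentiableAt ℂ a21 x)
    (hy1 : ∀ x ∈ U, DifferentiableAt ℂ y1 x)
    (hy2 : ∀ x ∈ U, DifferentiableAt ℂ y2 x)
    -- the original system `x^{k+1} y' = A y` with `A` traceless, i.e. `a22 = -a11`
    (hsys1 : ∀ x ∈ U, x ^ (k+1) * deriv y1 x = a11 x * y1 x + a12 x * y2 x)
    (hsys2 : ∀ x ∈ U, x ^ (k+1) * deriv y2 x = a21 x * y1 x - a11 x * y2 x)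
    -- `L = x^{k+1} (d/dx) log a12`
    (L : ℂ → ℂ) (hL : ∀ x, L x = x ^ (k+1) * deriv a12 x / a12 x)
    -- `Q = -det A + x^{k+1} a11' - a11 L - (1/2) x^{k+1} L' + (1/4) L²`,
    -- where `-det A = a11² + a12·a21` since `A` is traceless
    (Q : ℂ → ℂ)
    (hQ : ∀ x, Q x = (a11 x ^ 2 + a12 x * a21 x) + x ^ (k+1) * deriv a11 x
      - a11 x * L x - (1/2) * (x ^ (k+1) * deriv L x) + (1/4) * (L x) ^ 2)
    -- the gauge transformation `z = (1/√a12)·[[1,0],[a11 - (1/2)L, a12]]·y`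
    (z1 z2 : ℂ → ℂ)
    (hz1 : ∀ x, z1 x = y1 x / s x)
    (hz2 : ∀ x, z2 x = ((a11 x - (1/2) * L x) * y1 x + a12 x * y2 x) / s x) :
    ∀ x ∈ U, x ^ (k+1) * deriv z1 x = z2 x ∧ x ^ (k+1) * deriv z2 x = Q x * z1 x := by
  intro x hx
  have hUx : U ∈ nhds x := hU.mem_nhds hx
  have hB : a12 x ≠ 0 := ha12 x hx
  have hs0 : s x ≠ 0 := by
    intro h
    apply hB
    rw [← hs x hx, h]; ring
  have Hs : HasDerivAt s (deriv s x) x := (hsd x hx).hasDerivAt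
  have Hy1 : HasDerivAt y1 (deriv y1 x) x := (hy1 x hx).hasDerivAt
  have Hy2 : HasDerivAt y2 (deriv y2 x) x := (hy2 x hx).hasDerivAt
  have Ha11 : HasDerivAt a11 (deriv a11 x) x := (hd11 x hx).hasDerivAt
  have Ha12 : HasDerivAt a12 (deriv a12 x) x := (hd12 x hx).hasDerivAt
  -- L differentiable
  have hLfun : L = fun t => t ^ (k+1) * deriv a12 t / a12 t := funext hL
  have hLd : DifferentiableAt ℂ L x := by
    rw [hLfun]
    exact ((differentiableAt_pow (k+1)).mul (hd12' x hx)).div (hd12 x hx) hB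
  have HL : HasDerivAt L (deriv L x) x := hLd.hasDerivAt
  -- relation 2 s s' = a12'
  have heq : a12 =ᶠ[nhds x] fun t => s t ^ 2 := by
    filter_upwards [hUx] with t ht using (hs t ht).symm
  have h4 : deriv a12 x = 2 * s x * deriv s x := by
    have H2 : HasDerivAt (fun t => s t ^ 2) ((2:ℕ) * s x ^ (2-1) * deriv s x) x := Hs.pow 2
    have H3 : HasDerivAt a12 ((2:ℕ) * s x ^ (2-1) * deriv s x) x :=
      H2.congr_of_eventuallyEq heq
    rw [H3.deriv]; push_cast; ring
  have h1 := hsys1 x hx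
  have h2 := hsys2 x hx
  have h3 := hs x hx
  -- deriv z1
  have Hz1 : HasDerivAt z1 ((deriv y1 x * s x - y1 x * deriv s x) / s x ^ 2) x := by
    rw [funext hz1]
    exact Hy1.div Hs hs0
  -- deriv z2
  have Hz2 : HasDerivAt z2
      ((((deriv a11 x - (1/2) * deriv L x) * y1 x + (a11 x - (1/2) * L x) * deriv y1 x
        + (deriv a12 x * y2 x + a12 x * deriv y2 x)) * s x
        - ((a11 x - (1/2) * L x) * y1 x + a12 x * y2 x) * deriv s x) / s x ^ 2) x := by
    rw [funext hz2]
    exact (((Ha11.sub (HL.const_mul (1/2))).mul Hy1).add (Ha12.mul Hy2)).div Hs hs0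
  rw [← h3] at h1
  have h5 : L x * s x ^ 2 = x ^ (k+1) * (2 * s x * deriv s x) := by
    rw [hL x, ← h4, h3, div_mul_cancel₀ _ hB]
  have h6 : L x * s x = x ^ (k+1) * (2 * deriv s x) := mul_left_cancel₀ hs0 (by linear_combination h5)
  constructor
  · rw [Hz1.deriv, hz2 x]
    field_simp
    linear_combination (2 * s x) * h1 + y1 x * h6 + 2 * y2 x * s x * h3
  · rw [Hz2.deriv, hQ x, hz1 x]
    field_simp
    linear_combination (4 * s x * (2 * a11 x - L x)) * h1
      + (8 * s x * a12 x) * h2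
      + (8 * x ^ (k+1) * s x * y2 x) * h4
      + (4 * a11 x * y1 x - 2 * L x * y1 x - 4 * s x ^ 2 * y2 x) * h6
      + (8 * a11 x * s x * y2 x + 8 * x ^ (k+1) * deriv s x * y2 x) * h3
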